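/- Let n ≥ 1 and let f ∈ W^{2,2}(0, π/n) satisfy f(0) = f(π/n) = 0. Then for every θ ∈ [0, π/n], f(θ)² ≤ (π³/(48 n³)) ∫₀^{π/n} f''(φ)² dφ. -/

import Mathlib

open Real MeasureTheory intervalIntegral

/-- Cauchy–Schwarz for interval integrals of continuous functions. -/
lemma cs_interval (a b : ℝ) (hab : a ≤ b) (g h : ℝ → ℝ)
    (hg : Continuous g) (hh : Continuous h) :
    (∫ x in a..b, g x * h x) ^ 2 ≤
      (∫ x in a..b, (g x) ^ 2) * ∫ x in a..b, (h x) ^ 2 := by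
  set A := ∫ x in a..b, (g x) ^ 2 with hA
  set B := ∫ x in a..b, g x * h x with hB
  set C := ∫ x in a..b, (h x) ^ 2 with hC
  have key : ∀ t : ℝ, 0 ≤ A * (t * t) + (2 * B) * t + C := by
    intro t
    have hInt1 : IntervalIntegrable (fun x => (g x)^2) volume a b :=
      (hg.pow 2).intervalIntegrable a b
    have hInt2 : IntervalIntegrable (fun x => g x * h x) volume a b :=
      (hg.mul hh).intervalIntegrable a b
    have hInt3 : IntervalIntegrable (fun x => (h x)^2) volume a b :=
      (hh.pow 2).intervalIntegrable a b
    have expand : A * (t * t) + (2 * B) * t + C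
        = ∫ x in a..b, (t * g x + h x) ^ 2 := by
      have : (fun x => (t * g x + h x) ^ 2)
          = fun x => (t * t) * (g x)^2 + ((2 * t) * (g x * h x) + (h x)^2) := by
        funext x; ring
      rw [this, intervalIntegral.integral_add ((hInt1.const_mul _))
        ((hInt2.const_mul _).add hInt3),
        intervalIntegral.integral_add (hInt2.const_mul _) hInt3,
        intervalIntegral.integral_const_mul, intervalIntegral.integral_const_mul]
      simp only [hA, hB, hC]; ring
    rw [expand]
    apply intervalIntegral.integral_nonneg hab
    intro x _; positivity
  have hd := discrim_le_zero key
  rw [discrim] at hd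
  nlinarith [hd]

/-- If `f ∈ W^{2,2}(0,π/n)` (here: `f` twice continuously differentiable) vanishes at
both endpoints, then for every `θ ∈ [0, π/n]`,
`f(θ)² ≤ (π³/(48n³)) ∫₀^{π/n} f''(φ)² dφ`. -/
theorem pointwise_sq_bound (n : ℕ) (hn : 1 ≤ n) (f : ℝ → ℝ)
    (hf : ContDiff ℝ 2 f) (h0 : f 0 = 0) (h1 : f (Real.pi / n) = 0)
    (θ : ℝ) (hθ : θ ∈ Set.Icc (0 : ℝ) (Real.pi / n)) :
    (f θ) ^ 2 ≤ (Real.pi ^ 3 / (48 * (n : ℝ) ^ 3)) *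
      ∫ φ in (0 : ℝ)..(Real.pi / n), (deriv (deriv f) φ) ^ 2 := by
  set L : ℝ := Real.pi / n with hLdef
  have hn0 : (0 : ℝ) < n := by exact_mod_cast hn
  have hL : 0 < L := div_pos Real.pi_pos hn0
  obtain ⟨hθ0, hθL⟩ := hθ
  -- smoothness facts
  have hfd : Differentiable ℝ f := hf.differentiable (by norm_num)
  have hf' : ContDiff ℝ 1 (deriv f) :=
    (contDiff_succ_iff_deriv.mp (show ContDiff ℝ (1+1) f by exact_mod_cast hf)).2.2
  have hf'd : Differentiable ℝ (deriv f) := hf'.differentiable (by norm_num)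
  have hf'' : Continuous (deriv (deriv f)) :=
    ((contDiff_succ_iff_deriv.mp (show ContDiff ℝ (0+1) (deriv f) by exact_mod_cast hf')).2.2).continuous
  set h : ℝ → ℝ := deriv (deriv f) with hh
  -- Green's function
  set g : ℝ → ℝ := fun φ => if φ ≤ θ then (-(L - θ) / L) * φ else (-θ / L) * (L - φ)
    with hg
  have hgc : Continuous g := by
    apply Continuous.if_le
    · fun_prop
    · fun_prop
    · exact continuous_id
    · exact continuous_const
    · intro x hx
      rw [hx]
      field_simp
  -- integration by parts pieces
  have hvderiv : ∀ x ∈ Set.uIcc (0:ℝ) θ ∪ Set.uIcc θ L, HasDerivAt (deriv f) (h x) x :=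
    fun x _ => (hf'd x).hasDerivAt
  have ibp1 : ∫ φ in (0:ℝ)..θ, φ * h φ = θ * deriv f θ - f θ := by
    have := intervalIntegral.integral_mul_deriv_eq_deriv_mul
      (u := fun x => x) (u' := fun _ => (1:ℝ)) (v := deriv f) (v' := h)
      (fun x _ => hasDerivAt_id x) (fun x _ => (hf'd x).hasDerivAt)
      (intervalIntegrable_const) (hf''.intervalIntegrable 0 θ)
    rw [this]
    have : ∫ x in (0:ℝ)..θ, 1 * deriv f x = f θ - f 0 := by
      simp only [one_mul]
      exact intervalIntegral.integral_deriv_eq_sub (fun x _ => hfd x)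
        ((hf'.continuous).intervalIntegrable 0 θ)
    rw [this, h0]; ring
  have ibp2 : ∫ φ in θ..L, (L - φ) * h φ = -(L - θ) * deriv f θ - f θ := by
    have := intervalIntegral.integral_mul_deriv_eq_deriv_mul
      (u := fun x => L - x) (u' := fun _ => (-1:ℝ)) (v := deriv f) (v' := h)
      (fun x _ => by simpa using (hasDerivAt_id x).const_sub L)
      (fun x _ => (hf'd x).hasDerivAt)
      (intervalIntegrable_const) (hf''.intervalIntegrable θ L)
    rw [this]
    have : ∫ x in θ..L, (-1) * deriv f x = -(f L - f θ) := by
      rw [intervalIntegral.integral_const_mul,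
        intervalIntegral.integral_deriv_eq_sub (fun x _ => hfd x)
          ((hf'.continuous).intervalIntegrable θ L)]
      ring
    rw [this, h1]; ring
  -- Green representation
  have repr : f θ = ∫ φ in (0:ℝ)..L, g φ * h φ := by
    have hsplit : (∫ φ in (0:ℝ)..L, g φ * h φ)
        = (∫ φ in (0:ℝ)..θ, g φ * h φ) + ∫ φ in θ..L, g φ * h φ :=
      (intervalIntegral.integral_add_adjacent_intervals
        ((hgc.mul hf'').intervalIntegrable 0 θ)
        ((hgc.mul hf'').intervalIntegrable θ L)).symm
    have e1 : (∫ φ in (0:ℝ)..θ, g φ * h φ)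
        = ∫ φ in (0:ℝ)..θ, (-(L - θ) / L) * (φ * h φ) := by
      apply intervalIntegral.integral_congr
      intro x hx
      rw [Set.uIcc_of_le hθ0] at hx
      simp only [hg, if_pos hx.2]; ring
    have e2 : (∫ φ in θ..L, g φ * h φ)
        = ∫ φ in θ..L, (-θ / L) * ((L - φ) * h φ) := by
      apply intervalIntegral.integral_congr
      intro x hx
      rw [Set.uIcc_of_le hθL] at hx
      by_cases hxθ : x ≤ θ
      · have : x = θ := le_antisymm hxθ hx.1
        simp only [hg, this, le_refl, if_pos]; ring
      · simp only [hg, if_neg hxθ]; ring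
    rw [hsplit, e1, e2, intervalIntegral.integral_const_mul,
      intervalIntegral.integral_const_mul, ibp1, ibp2]
    field_simp
    ring
  -- compute ∫ g²
  have hg2 : (∫ φ in (0:ℝ)..L, (g φ)^2) = θ^2 * (L - θ)^2 / (3 * L) := by
    have hsplit : (∫ φ in (0:ℝ)..L, (g φ)^2)
        = (∫ φ in (0:ℝ)..θ, (g φ)^2) + ∫ φ in θ..L, (g φ)^2 :=
      (intervalIntegral.integral_add_adjacent_intervals
        ((hgc.pow 2).intervalIntegrable 0 θ)
        ((hgc.pow 2).intervalIntegrable θ L)).symm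
    have e1 : (∫ φ in (0:ℝ)..θ, (g φ)^2)
        = ((L - θ) / L)^2 * (θ^3 / 3) := by
      have : (∫ φ in (0:ℝ)..θ, (g φ)^2)
          = ∫ φ in (0:ℝ)..θ, ((L - θ)/L)^2 * φ^2 := by
        apply intervalIntegral.integral_congr
        intro x hx
        rw [Set.uIcc_of_le hθ0] at hx
        simp only [hg, if_pos hx.2]; ring
      rw [this, intervalIntegral.integral_const_mul, integral_pow]
      norm_num
    have e2 : (∫ φ in θ..L, (g φ)^2)
        = (θ / L)^2 * ((L - θ)^3 / 3) := by
      have step1 : (∫ φ in θ..L, (g φ)^2)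
          = ∫ φ in θ..L, (θ/L)^2 * (L - φ)^2 := by
        apply intervalIntegral.integral_congr
        intro x hx
        rw [Set.uIcc_of_le hθL] at hx
        by_cases hxθ : x ≤ θ
        · have : x = θ := le_antisymm hxθ hx.1
          simp only [hg, this, le_refl, if_pos]; ring
        · simp only [hg, if_neg hxθ]; ring
      have step2 : (∫ φ in θ..L, (L - φ)^2) = (L - θ)^3 / 3 := by
        have := intervalIntegral.integral_comp_sub_left
          (a := θ) (b := L) (fun x => x ^ 2) L
        rw [this, integral_pow]
        norm_num
      rw [step1, intervalIntegral.integral_const_mul, step2]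
    rw [hsplit, e1, e2]
    field_simp
    ring
  -- Cauchy–Schwarz
  have hcs := cs_interval 0 L (le_of_lt hL) g h hgc hf''
  rw [← repr, hg2] at hcs
  have hInt2 : 0 ≤ ∫ φ in (0:ℝ)..L, (h φ)^2 :=
    intervalIntegral.integral_nonneg (le_of_lt hL) (fun x _ => sq_nonneg _)
  have hbound : θ^2 * (L - θ)^2 / (3 * L) ≤ L^3 / 48 := by
    rw [div_le_div_iff₀ (by positivity) (by norm_num)]
    have hnn : 0 ≤ θ * (L - θ) := mul_nonneg hθ0 (sub_nonneg.mpr hθL)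
    have h4 : 4 * (θ * (L - θ)) ≤ L ^ 2 := by nlinarith [sq_nonneg (2*θ - L)]
    have hmul := mul_le_mul h4 h4 (by linarith) (sq_nonneg L)
    nlinarith [hmul]
  have hfinal : (f θ)^2 ≤ L^3 / 48 * ∫ φ in (0:ℝ)..L, (h φ)^2 :=
    le_trans hcs (mul_le_mul_of_nonneg_right hbound hInt2)
  have hLcube : L^3 / 48 = Real.pi ^ 3 / (48 * (n:ℝ)^3) := by
    rw [hLdef]; field_simp
  rw [hLcube] at hfinal
  exact hfinal
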